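/- Let A, B be finite subsets of ℝⁿ, fix β > 0, and let δ > 0 be such that for every closed set S ⊆ ℝⁿ, |S ∩ A| ≤ |S^δ ∩ B| + δ. Then for all r > 0 and all k > δ, ACr^β_{r,k}(A) ⊆ ACr^β_{r', k−δ}(B), where r' = max{1, 2β}·((1+β^{-1})r + δ). -/

import Mathlib

open Metric ENNReal

/-- The `k`-core distance of `x` to a finite set `A`:
`inf { r ≥ 0 : |B(x,r) ∩ A| ≥ ⌈k⌉ }` (valued in `ℝ≥0∞`). -/
noncomputable def coreDist {M : Type*} [MetricSpace M] (A : Finset M) (k : ℝ) (x : M) : ℝ≥0∞ :=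
  sInf {r : ℝ≥0∞ | ⌈k⌉ ≤ (((A : Set M) ∩ {y | edist x y ≤ r}).ncard : ℤ)}

/-- The core dissimilarity `Λ^β_k(a,x) = max { β·Core^A_k(a), d(a,x) }`. -/
noncomputable def lam {M : Type*} [MetricSpace M] (A : Finset M) (β k : ℝ) (a x : M) : ℝ≥0∞ :=
  max (ENNReal.ofReal β * coreDist A k a) (edist a x)

/-- The multicover bifiltration. -/
def Cov {M : Type*} [MetricSpace M] (A : Finset M) (r k : ℝ) : Set M :=
  {x | ⌈k⌉ ≤ (((A : Set M) ∩ Metric.closedBall x r).ncard : ℤ)}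

/-- The core bifiltration. -/
def Cr {M : Type*} [MetricSpace M] (A : Finset M) (β r k : ℝ) : Set M :=
  ⋃ a ∈ A, {x | lam A β k a x ≤ ENNReal.ofReal r}

/-- Voronoi cell of `a ∈ A`. -/
def Vor {n : ℕ} (A : Finset (EuclideanSpace ℝ (Fin n))) (a : EuclideanSpace ℝ (Fin n)) :
    Set (EuclideanSpace ℝ (Fin n)) :=
  {x | ∀ a' ∈ A, dist a x ≤ dist a' x}

/-- The Delaunay core bifiltration. -/
def ACr {n : ℕ} (A : Finset (EuclideanSpace ℝ (Fin n))) (β r k : ℝ) :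
    Set (EuclideanSpace ℝ (Fin n)) :=
  ⋃ a ∈ A, ({x | lam A β k a x ≤ ENNReal.ofReal r} ∩ Vor A a)

/-- The closed `δ`-thickening of a set `S`. -/
def thick {M : Type*} [MetricSpace M] (S : Set M) (δ : ℝ) : Set M :=
  {x | ∃ s ∈ S, dist s x ≤ δ}


open Metric ENNReal

variable {M : Type*} [MetricSpace M]

lemma count_mono (A : Finset M) (a : M) {r s : ℝ≥0∞} (h : r ≤ s) :
    ((A : Set M) ∩ {y | edist a y ≤ r}).ncard ≤ ((A : Set M) ∩ {y | edist a y ≤ s}).ncard := by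
  apply Set.ncard_le_ncard
  · exact Set.inter_subset_inter_right _ (fun y hy => le_trans hy h)
  · exact A.finite_toSet.inter_of_left _

lemma coreDist_le (A : Finset M) (k : ℝ) (a : M) {ρ : ℝ≥0∞}
    (h : ⌈k⌉ ≤ (((A : Set M) ∩ {y | edist a y ≤ ρ}).ncard : ℤ)) :
    coreDist A k a ≤ ρ := sInf_le h

lemma coreDist_spec (A : Finset M) (k : ℝ) (a : M)
    (hfin : coreDist A k a ≠ ⊤) :
    ⌈k⌉ ≤ (((A : Set M) ∩ {y | edist a y ≤ coreDist A k a}).ncard : ℤ) := by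
  set S := {r : ℝ≥0∞ | ⌈k⌉ ≤ (((A : Set M) ∩ {y | edist a y ≤ r}).ncard : ℤ)} with hS
  have hne : S.Nonempty := by
    by_contra hc
    rw [Set.not_nonempty_iff_eq_empty] at hc
    exact hfin (by simp [coreDist, ← hS, hc])
  set t := coreDist A k a with ht
  have htinf : t = sInf S := rfl
  set T := (A.filter (fun y => t < edist a y)).image (fun y => edist a y) with hT
  by_cases hTe : T.Nonempty
  · have hm : sInf S < T.min' hTe := by
      rw [← htinf]
      obtain ⟨y, hy, hy2⟩ := Finset.mem_image.mp (T.min'_mem hTe)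
      rw [← hy2]
      exact (Finset.mem_filter.mp hy).2
    obtain ⟨ρ, hρS, hρlt⟩ := sInf_lt_iff.mp hm
    have hsub : (A : Set M) ∩ {y | edist a y ≤ ρ} ⊆ (A : Set M) ∩ {y | edist a y ≤ t} := by
      rintro y ⟨hyA, hyρ⟩
      refine ⟨hyA, ?_⟩
      by_contra hgt
      rw [Set.mem_setOf_eq, not_le] at hgt
      have : edist a y ∈ T := Finset.mem_image.mpr ⟨y, Finset.mem_filter.mpr ⟨hyA, hgt⟩, rfl⟩
      exact absurd (le_trans (T.min'_le _ this) hyρ) (not_le.mpr hρlt)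
    calc (⌈k⌉ : ℤ) ≤ _ := hρS
      _ ≤ _ := by
        exact_mod_cast Set.ncard_le_ncard hsub (A.finite_toSet.inter_of_left _)
  · obtain ⟨ρ, hρS⟩ := hne
    have hsub : (A : Set M) ∩ {y | edist a y ≤ ρ} ⊆ (A : Set M) ∩ {y | edist a y ≤ t} := by
      rintro y ⟨hyA, _⟩
      refine ⟨hyA, ?_⟩
      by_contra hgt
      rw [Set.mem_setOf_eq, not_le] at hgt
      exact hTe ⟨_, Finset.mem_image.mpr ⟨y, Finset.mem_filter.mpr ⟨hyA, hgt⟩, rfl⟩⟩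
    calc (⌈k⌉ : ℤ) ≤ _ := hρS
      _ ≤ _ := by
        exact_mod_cast Set.ncard_le_ncard hsub (A.finite_toSet.inter_of_left _)

theorem stmt14 {n : ℕ} (A B : Finset (EuclideanSpace ℝ (Fin n))) (β : ℝ) (hβ : 0 < β)
    (δ : ℝ) (hδ : 0 < δ)
    (hstab : ∀ S : Set (EuclideanSpace ℝ (Fin n)), IsClosed S →
      (((S ∩ (A : Set (EuclideanSpace ℝ (Fin n)))).ncard : ℝ)) ≤
        ((thick S δ ∩ (B : Set (EuclideanSpace ℝ (Fin n)))).ncard : ℝ) + δ)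
    (r k : ℝ) (hr : 0 < r) (hk : δ < k) :
    ACr A β r k ⊆ ACr B β (max 1 (2 * β) * ((1 + β⁻¹) * r + δ)) (k - δ) := by
  intro x hx
  simp only [ACr, Set.mem_iUnion, Set.mem_inter_iff] at hx ⊢
  obtain ⟨a, haA, hlam, hvor⟩ := hx
  simp only [Set.mem_setOf_eq, lam] at hlam
  rw [max_le_iff] at hlam
  obtain ⟨hcore, hdist⟩ := hlam
  have hβ0 : ENNReal.ofReal β ≠ 0 := (ENNReal.ofReal_pos.mpr hβ).ne'
  have hβi : 0 < β⁻¹ := inv_pos.mpr hβ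
  set ρ : ℝ := (1 + β⁻¹) * r with hρdef
  have hρ0 : 0 < ρ := by positivity
  set ρ' : ℝ := ρ + δ with hρ'def
  have hρ'0 : 0 < ρ' := by positivity
  set R : ℝ := max 1 (2 * β) * ρ' with hRdef
  have hρ'R : ρ' ≤ R := le_mul_of_one_le_left hρ'0.le (le_max_left _ _)
  -- Step 0 : coreDist A k a ≤ ofReal (β⁻¹ * r)
  have hcd : coreDist A k a ≤ ENNReal.ofReal (β⁻¹ * r) := by
    rw [mul_comm, ← ENNReal.le_div_iff_mul_le (Or.inl hβ0) (Or.inl ENNReal.ofReal_ne_top)]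
      at hcore
    rwa [ENNReal.ofReal_mul hβi.le, ENNReal.ofReal_inv_of_pos hβ, ← ENNReal.div_eq_inv_mul]
  have hfin : coreDist A k a ≠ ⊤ :=
    ne_top_of_le_ne_top ENNReal.ofReal_ne_top hcd
  -- Step 1 : x ∈ Cov A ρ k
  have hstep1 : (⌈k⌉ : ℤ) ≤ (((A : Set (EuclideanSpace ℝ (Fin n))) ∩ closedBall x ρ).ncard : ℤ) := by
    refine le_trans (coreDist_spec A k a hfin) ?_
    have hsub : (A : Set (EuclideanSpace ℝ (Fin n))) ∩ {y | edist a y ≤ coreDist A k a}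
        ⊆ (A : Set (EuclideanSpace ℝ (Fin n))) ∩ closedBall x ρ := by
      rintro y ⟨hyA, hy⟩
      refine ⟨hyA, ?_⟩
      have h1 : dist a y ≤ β⁻¹ * r :=
        (edist_le_ofReal (by positivity)).mp (le_trans hy hcd)
      have h2 : dist a x ≤ r := (edist_le_ofReal hr.le).mp hdist
      rw [mem_closedBall]
      calc dist y x ≤ dist y a + dist a x := dist_triangle _ _ _
        _ ≤ β⁻¹ * r + r := by rw [dist_comm]; exact add_le_add h1 h2
        _ = ρ := by ring
    exact_mod_cast Set.ncard_le_ncard hsub (A.finite_toSet.inter_of_left _)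
  -- Step 2 : x ∈ Cov B ρ' (k - δ)
  have hthick : thick (closedBall x ρ) δ ⊆ closedBall x ρ' := by
    rintro y ⟨s, hs, hsy⟩
    rw [mem_closedBall] at hs ⊢
    calc dist y x ≤ dist y s + dist s x := dist_triangle _ _ _
      _ ≤ δ + ρ := add_le_add (by rwa [dist_comm]) hs
      _ = ρ' := by ring
  have hstep2 : (⌈k - δ⌉ : ℤ) ≤
      (((B : Set (EuclideanSpace ℝ (Fin n))) ∩ closedBall x ρ').ncard : ℤ) := by
    have h1 := hstab (closedBall x ρ) isClosed_closedBall
    have h2 : ((thick (closedBall x ρ) δ ∩ (B : Set (EuclideanSpace ℝ (Fin n)))).ncard : ℝ) ≤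
        (((B : Set (EuclideanSpace ℝ (Fin n))) ∩ closedBall x ρ').ncard : ℝ) := by
      have hsub2 : thick (closedBall x ρ) δ ∩ (B : Set (EuclideanSpace ℝ (Fin n)))
          ⊆ (B : Set (EuclideanSpace ℝ (Fin n))) ∩ closedBall x ρ' :=
        fun y hy => ⟨hy.2, hthick hy.1⟩
      exact_mod_cast Set.ncard_le_ncard hsub2 (B.finite_toSet.inter_of_left _)
    have h3 : (⌈k⌉ : ℝ) ≤ ((closedBall x ρ ∩ (A : Set (EuclideanSpace ℝ (Fin n)))).ncard : ℝ) := by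
      rw [Set.inter_comm]
      exact_mod_cast hstep1
    have h4 : k - δ ≤
        ((((B : Set (EuclideanSpace ℝ (Fin n))) ∩ closedBall x ρ').ncard : ℤ) : ℝ) := by
      push_cast
      have h5 := h3.trans h1
      have hkc : k ≤ (⌈k⌉ : ℝ) := Int.le_ceil k
      linarith
    exact Int.ceil_le.mpr h4
  -- Step 3 : x ∈ ACr B β R (k - δ)
  set m : Set (EuclideanSpace ℝ (Fin n)) :=
    (B : Set (EuclideanSpace ℝ (Fin n))) ∩ closedBall x ρ' with hmdef
  have hmfin : m.Finite := B.finite_toSet.inter_of_left _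
  have hmne : m.Nonempty := by
    rw [← Set.ncard_pos hmfin]
    have h1 : (0 : ℤ) < ⌈k - δ⌉ := Int.ceil_pos.mpr (by linarith)
    omega
  obtain ⟨b₀, hb₀⟩ := hmne
  obtain ⟨a', ha'B, hmin⟩ :=
    B.exists_min_image (fun b => dist b x) ⟨b₀, hb₀.1⟩
  have ha'x : dist a' x ≤ ρ' := le_trans (hmin b₀ hb₀.1) (mem_closedBall.mp hb₀.2)
  refine ⟨a', ha'B, ?_, fun b hb => hmin b hb⟩
  simp only [Set.mem_setOf_eq, lam]
  rw [max_le_iff]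
  constructor
  · -- β · coreDist ≤ R
    have hcd' : coreDist B (k - δ) a' ≤ ENNReal.ofReal (2 * ρ') := by
      apply coreDist_le
      refine le_trans hstep2 ?_
      have hsub : m ⊆ (B : Set (EuclideanSpace ℝ (Fin n))) ∩ {y | edist a' y ≤ ENNReal.ofReal (2 * ρ')} := by
        rintro y ⟨hyB, hy⟩
        refine ⟨hyB, ?_⟩
        rw [Set.mem_setOf_eq, edist_le_ofReal (by positivity)]
        rw [mem_closedBall] at hy
        calc dist a' y ≤ dist a' x + dist x y := dist_triangle _ _ _
          _ ≤ ρ' + ρ' := add_le_add ha'x (by rwa [dist_comm])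
          _ = 2 * ρ' := by ring
      exact_mod_cast Set.ncard_le_ncard hsub (B.finite_toSet.inter_of_left _)
    calc ENNReal.ofReal β * coreDist B (k - δ) a'
        ≤ ENNReal.ofReal β * ENNReal.ofReal (2 * ρ') := by
          exact mul_le_mul_right hcd' _
      _ = ENNReal.ofReal (β * (2 * ρ')) := (ENNReal.ofReal_mul hβ.le).symm
      _ ≤ ENNReal.ofReal R := by
          apply ENNReal.ofReal_le_ofReal
          rw [hRdef, show β * (2 * ρ') = (2 * β) * ρ' by ring]
          exact mul_le_mul_of_nonneg_right (le_max_right _ _) hρ'0.le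
  · rw [edist_le_ofReal (by positivity)]
    exact le_trans ha'x hρ'R
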